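/- Let η ∈ [0, 1/2) and γ ∈ (0, 2/(3+2η)), and set 𝔠 = 1 − γ/2 − γη. Then γ < 𝔠 and γ + 𝔠 > 1, and there exist r₀ ≥ 1 and λ₀ ∈ (0,1) such that for all r ≥ r₀ and all λ ∈ (0, λ₀) for which a := r·λ^{2/(γ(1−2η))} < 1, one has 4λ·∫_0^1 y^{−γ}·(max(y,a))^{−𝔠} dy ≤ 1. -/

import Mathlib

open Real Set

theorem stmt19 (η γ 𝔠 : ℝ) (hη0 : 0 ≤ η) (hη : η < 1 / 2)
    (hγ0 : 0 < γ) (hγ : γ < 2 / (3 + 2 * η)) (h𝔠 : 𝔠 = 1 - γ / 2 - γ * η) :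
    γ < 𝔠 ∧ 1 < γ + 𝔠 ∧
    ∃ r₀ lam₀ : ℝ, 1 ≤ r₀ ∧ 0 < lam₀ ∧ lam₀ < 1 ∧
      ∀ r : ℝ, r₀ ≤ r → ∀ lam : ℝ, 0 < lam → lam < lam₀ →
        r * lam ^ (2 / (γ * (1 - 2 * η))) < 1 →
        4 * lam * ∫ y in (0 : ℝ)..1,
            y ^ (-γ) * (max y (r * lam ^ (2 / (γ * (1 - 2 * η))))) ^ (-𝔠) ≤ 1 := by
  have h3 : (0:ℝ) < 3 + 2 * η := by linarith
  have hγ' : γ * (3 + 2 * η) < 2 := by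
    rw [lt_div_iff₀ h3] at hγ; linarith
  have hγ1 : γ < 1 := by nlinarith
  have hγη : (0:ℝ) < γ * (1 - 2 * η) := by nlinarith
  have hβ : (0:ℝ) < γ * (1 - 2 * η) / 2 := by linarith
  set β : ℝ := γ * (1 - 2 * η) / 2 with hβdef
  have h1 : γ < 𝔠 := by rw [h𝔠]; nlinarith
  have h2 : 1 < γ + 𝔠 := by rw [h𝔠]; nlinarith
  have hpc : γ + 𝔠 - 1 = β := by rw [h𝔠, hβdef]; ring
  refine ⟨h1, h2, ?_⟩
  set C : ℝ := 1 / (1 - γ) + 1 / β with hCdef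
  have hC : 0 < C := add_pos (div_pos one_pos (by linarith)) (div_pos one_pos hβ)
  refine ⟨max 1 ((4 * C) ^ (β⁻¹ : ℝ)), 1/2, le_max_left _ _, by norm_num, by norm_num, ?_⟩
  intro r hr lam hlam hlam2 ha1
  set e : ℝ := 2 / (γ * (1 - 2 * η)) with hedef
  set a : ℝ := r * lam ^ e with hadef
  have hr1 : (1:ℝ) ≤ r := le_trans (le_max_left _ _) hr
  have hrpos : (0:ℝ) < r := by linarith
  have hlpos : (0:ℝ) < lam ^ e := rpow_pos_of_pos hlam e
  have hapos : 0 < a := mul_pos hrpos hlpos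
  have hne : γ * (1 - 2 * η) ≠ 0 := ne_of_gt hγη
  have heβ : e * β = 1 := by
    rw [hedef, hβdef]; field_simp
    exact div_self (by intro h; linarith)
  -- Integral computation
  have key : ∫ y in (0:ℝ)..1, y ^ (-γ) * (max y a) ^ (-𝔠)
      = a ^ (-𝔠) * (a ^ (1 - γ) / (1 - γ)) + (1 - a ^ (1 - γ - 𝔠)) / (1 - γ - 𝔠) := by
    have hsplit : ∫ y in (0:ℝ)..1, y ^ (-γ) * (max y a) ^ (-𝔠)
        = (∫ y in (0:ℝ)..a, y ^ (-γ) * (max y a) ^ (-𝔠))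
          + ∫ y in a..1, y ^ (-γ) * (max y a) ^ (-𝔠) := by
      rw [intervalIntegral.integral_add_adjacent_intervals]
      · -- integrable on (0, a)
        rw [intervalIntegrable_iff]
        apply MeasureTheory.IntegrableOn.congr_fun
          (f := fun y => y ^ (-γ) * a ^ (-𝔠)) (g := fun y => y ^ (-γ) * (max y a) ^ (-𝔠))
        · have : IntervalIntegrable (fun y : ℝ => y ^ (-γ) * a ^ (-𝔠)) MeasureTheory.volume 0 a :=
            (intervalIntegral.intervalIntegrable_rpow' (by linarith)).mul_const _
          rwa [intervalIntegrable_iff] at this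
        · intro y hy
          rw [uIoc_of_le hapos.le] at hy
          simp only
          rw [max_eq_right hy.2]
        · exact measurableSet_uIoc
      · rw [intervalIntegrable_iff]
        apply MeasureTheory.IntegrableOn.congr_fun
          (f := fun y => y ^ (-γ - 𝔠)) (g := fun y => y ^ (-γ) * (max y a) ^ (-𝔠))
        · have : IntervalIntegrable (fun y : ℝ => y ^ (-γ - 𝔠)) MeasureTheory.volume a 1 := by
            apply intervalIntegral.intervalIntegrable_rpow (Or.inr ?_)
            rw [uIcc_of_le ha1.le]
            intro h
            exact absurd h.1 (not_le.mpr hapos)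
          rwa [intervalIntegrable_iff] at this
        · intro y hy
          rw [uIoc_of_le ha1.le] at hy
          simp only
          rw [max_eq_left hy.1.le, ← Real.rpow_add (lt_trans hapos hy.1)]
          ring_nf
        · exact measurableSet_uIoc
    rw [hsplit]
    have e1 : (∫ y in (0:ℝ)..a, y ^ (-γ) * (max y a) ^ (-𝔠))
        = a ^ (-𝔠) * (a ^ (1 - γ) / (1 - γ)) := by
      rw [intervalIntegral.integral_congr (g := fun y => y ^ (-γ) * a ^ (-𝔠))]
      · rw [intervalIntegral.integral_mul_const, integral_rpow (Or.inl (by linarith))]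
        rw [Real.zero_rpow (by intro h; linarith)]
        ring_nf
      · intro y hy
        rw [uIcc_of_le hapos.le] at hy
        simp only
        rw [max_eq_right hy.2]
    have e2 : (∫ y in a..1, y ^ (-γ) * (max y a) ^ (-𝔠))
        = (1 - a ^ (1 - γ - 𝔠)) / (1 - γ - 𝔠) := by
      rw [intervalIntegral.integral_congr (g := fun y => y ^ (-γ - 𝔠))]
      · rw [integral_rpow (Or.inr ⟨by intro h; rw [show -γ - 𝔠 = -(γ + 𝔠) by ring] at h; have := neg_injective h; linarith, ?_⟩)]
        · rw [Real.one_rpow]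
          ring_nf
        · rw [uIcc_of_le ha1.le]
          intro h
          exact absurd h.1 (not_le.mpr hapos)
      · intro y hy
        rw [uIcc_of_le ha1.le] at hy
        simp only
        rw [max_eq_left hy.1, ← Real.rpow_add (lt_of_lt_of_le hapos hy.1)]
        ring_nf
    rw [e1, e2]
  rw [key]
  -- now bound
  have hab : a ^ (-𝔠) * a ^ (1 - γ) = a ^ (-β) := by
    rw [← Real.rpow_add hapos]
    congr 1
    linarith [hpc]
  have hab2 : a ^ (1 - γ - 𝔠) = a ^ (-β) := by
    congr 1; linarith [hpc]
  have haβ : a ^ (-β) = r ^ (-β) / lam := by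
    rw [hadef, Real.mul_rpow hrpos.le hlpos.le, ← Real.rpow_mul hlam.le,
      show e * -β = -1 by rw [← heβ]; ring, Real.rpow_neg_one]
    ring
  have haβpos : 0 < a ^ (-β) := rpow_pos_of_pos hapos _
  have h1γ : (1:ℝ) - γ ≠ 0 := by intro h; linarith
  have hβne : β ≠ 0 := ne_of_gt hβ
  have hbound1 : a ^ (-𝔠) * (a ^ (1 - γ) / (1 - γ)) + (1 - a ^ (1 - γ - 𝔠)) / (1 - γ - 𝔠)
      ≤ a ^ (-β) * C := by
    rw [hab2, show (1 - γ - 𝔠) = -β by linarith, mul_div_assoc', hab, hCdef]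
    have e4 : a ^ (-β) / (1 - γ) + (1 - a ^ (-β)) / (-β)
        = a ^ (-β) * (1 / (1 - γ) + 1 / β) - 1 / β := by
      have gen : ∀ x u v : ℝ, u ≠ 0 → v ≠ 0 →
          x / u + (1 - x) / (-v) = x * (1 / u + 1 / v) - 1 / v := by
        intro x u v hu hv
        rw [div_neg]
        ring
      exact gen _ _ _ h1γ hβne
    rw [e4]
    have : 0 < 1 / β := one_div_pos.mpr hβ
    linarith
  have hr4 : 4 * C ≤ r ^ (β : ℝ) := by
    calc 4 * C = ((4 * C) ^ (β⁻¹ : ℝ)) ^ (β : ℝ) := by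
          rw [← Real.rpow_mul (by positivity), inv_mul_cancel₀ hβne, Real.rpow_one]
      _ ≤ r ^ (β : ℝ) :=
          Real.rpow_le_rpow (Real.rpow_nonneg (by positivity) _)
            (le_trans (le_max_right _ _) hr) hβ.le
  calc 4 * lam * (a ^ (-𝔠) * (a ^ (1 - γ) / (1 - γ)) + (1 - a ^ (1 - γ - 𝔠)) / (1 - γ - 𝔠))
      ≤ 4 * lam * (a ^ (-β) * C) := by
        apply mul_le_mul_of_nonneg_left hbound1 (by positivity)
    _ = 4 * C / r ^ (β : ℝ) := by
        rw [haβ, Real.rpow_neg hrpos.le]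
        field_simp
    _ ≤ 1 := (div_le_one (Real.rpow_pos_of_pos hrpos _)).mpr hr4
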